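/- Let d ≥ 1, ε ∈ ℝ, and let S : ℝ^d → ℝ, A : ℝ^d → ℂ be smooth (C^∞). With the operators N₁(S,A) = ( −|∇S|²/2 , −∇S·∇A − (A/2)ΔS + (i/2)ΔA ) and N₄(S,A) = ( ε²ΔS , −iε A ΔS ), and their Gateaux derivatives DN₁(S,A)·(S₀,A₀) = ( −∇S·∇S₀ , −∇S·∇A₀ − (A₀/2)ΔS − ∇S₀·∇A − (A/2)ΔS₀ + (i/2)ΔA₀ ) and DN₄(S,A)·(S₀,A₀) = ( ε²ΔS₀ , −iε( A₀ΔS + AΔS₀ ) ), the commutator [N₁,N₄](S,A) := DN₁(S,A)·N₄(S,A) − DN₄(S,A)·N₁(S,A) equals, at every point, ( ε² Σ_{k=1}^d |∇(∂_k S)|² , (ε − ε²) ( ∇ΔS·∇A + (A/2)Δ²S ) − iε A Σ_{k=1}^d |∇(∂_k S)|² ). -/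

import Mathlib

noncomputable section

open Real Complex Finset

/-- Partial derivative in the `k`-th coordinate direction of a function on `ℝ^d`. -/
def pds {d : ℕ} {E : Type*} [NormedAddCommGroup E] [NormedSpace ℝ E]
    (f : (Fin d → ℝ) → E) (k : Fin d) (x : Fin d → ℝ) : E :=
  fderiv ℝ f x (Pi.single k 1)

/-- Laplacian `Δ = ∑ₖ ∂²_{x_k}` of a function on `ℝ^d`. -/
def laps {d : ℕ} {E : Type*} [NormedAddCommGroup E] [NormedSpace ℝ E]
    (f : (Fin d → ℝ) → E) (x : Fin d → ℝ) : E :=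
  ∑ k : Fin d, pds (pds f k) k x

section helpers
variable {d : ℕ} {E : Type*} [NormedAddCommGroup E] [NormedSpace ℝ E]

lemma contDiff_pds {f : (Fin d → ℝ) → E} (hf : ContDiff ℝ (⊤ : ℕ∞) f) (k : Fin d) :
    ContDiff ℝ (⊤ : ℕ∞) (pds f k) := by
  have h1 : ContDiff ℝ (⊤ : ℕ∞) (fun x => fderiv ℝ f x) := hf.fderiv_right (by simp)
  exact (ContinuousLinearMap.apply ℝ E (Pi.single k 1)).contDiff.comp h1

lemma contDiff_laps {f : (Fin d → ℝ) → E} (hf : ContDiff ℝ (⊤ : ℕ∞) f) :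
    ContDiff ℝ (⊤ : ℕ∞) (laps f) := by
  have : ContDiff ℝ (⊤ : ℕ∞) (fun x => ∑ k : Fin d, pds (pds f k) k x) :=
    ContDiff.sum fun k _ => contDiff_pds (contDiff_pds hf k) k
  exact this

lemma pds_sndDeriv {f : (Fin d → ℝ) → E} (hf : ContDiff ℝ (⊤ : ℕ∞) f) (j k : Fin d)
    (x : Fin d → ℝ) :
    pds (pds f k) j x = fderiv ℝ (fderiv ℝ f) x (Pi.single j 1) (Pi.single k 1) := by
  have h1 : ContDiff ℝ (⊤ : ℕ∞) (fun x => fderiv ℝ f x) := hf.fderiv_right (by simp)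
  have hdf : DifferentiableAt ℝ (fderiv ℝ f) x := (h1.differentiable (by simp)) x
  have h := ((ContinuousLinearMap.apply ℝ E (Pi.single k 1)).hasFDerivAt.comp x
    hdf.hasFDerivAt).fderiv
  calc pds (pds f k) j x
      = fderiv ℝ ((ContinuousLinearMap.apply ℝ E (Pi.single k 1)) ∘ fderiv ℝ f) x
        (Pi.single j 1) := rfl
    _ = _ := by rw [h]; rfl

lemma pds_comm {f : (Fin d → ℝ) → E} (hf : ContDiff ℝ (⊤ : ℕ∞) f) (j k : Fin d)
    (x : Fin d → ℝ) : pds (pds f k) j x = pds (pds f j) k x := by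
  rw [pds_sndDeriv hf, pds_sndDeriv hf]
  exact (hf.contDiffAt.isSymmSndFDerivAt (n := (⊤ : ℕ∞)) (by simp; exact WithTop.coe_le_coe.mpr (le_top : (2 : ℕ∞) ≤ ⊤))).eq _ _

end helpers

section calcrules
variable {d : ℕ} {E : Type*} [NormedAddCommGroup E] [NormedSpace ℝ E]
variable {𝔸 : Type*} [NormedCommRing 𝔸] [NormedAlgebra ℝ 𝔸]

lemma sdiff {f : (Fin d → ℝ) → E} (hf : ContDiff ℝ (⊤ : ℕ∞) f) : Differentiable ℝ f :=
  hf.differentiable (by simp)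

lemma pds_add {f g : (Fin d → ℝ) → E} (hf : Differentiable ℝ f) (hg : Differentiable ℝ g)
    (k : Fin d) (x : Fin d → ℝ) :
    pds (fun y => f y + g y) k x = pds f k x + pds g k x := by
  simp [pds, fderiv_fun_add (hf x) (hg x)]

lemma pds_sum {ι : Type*} (u : Finset ι) {f : ι → (Fin d → ℝ) → E}
    (hf : ∀ i ∈ u, Differentiable ℝ (f i)) (k : Fin d) (x : Fin d → ℝ) :
    pds (fun y => ∑ i ∈ u, f i y) k x = ∑ i ∈ u, pds (f i) k x := by
  simp [pds, fderiv_fun_sum (fun i hi => (hf i hi) x)]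

lemma pds_const_mul {f : (Fin d → ℝ) → 𝔸} (hf : Differentiable ℝ f) (c : 𝔸)
    (k : Fin d) (x : Fin d → ℝ) :
    pds (fun y => c * f y) k x = c * pds f k x := by
  simp [pds, fderiv_const_mul (hf x) c]

lemma pds_mul {f g : (Fin d → ℝ) → 𝔸} (hf : Differentiable ℝ f) (hg : Differentiable ℝ g)
    (k : Fin d) (x : Fin d → ℝ) :
    pds (fun y => f y * g y) k x = pds f k x * g x + f x * pds g k x := by
  simp [pds, fderiv_fun_mul (hf x) (hg x), smul_eq_mul]
  ring

lemma pds_ofReal {f : (Fin d → ℝ) → ℝ} (hf : Differentiable ℝ f) (k : Fin d) (x : Fin d → ℝ) :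
    pds (fun y => ((f y : ℝ) : ℂ)) k x = ((pds f k x : ℝ) : ℂ) := by
  have h := (Complex.ofRealCLM.hasFDerivAt.comp x (hf x).hasFDerivAt).fderiv
  calc pds (fun y => ((f y : ℝ) : ℂ)) k x
      = fderiv ℝ (Complex.ofRealCLM ∘ f) x (Pi.single k 1) := rfl
    _ = _ := by rw [h]; rfl

lemma laps_const_mul {f : (Fin d → ℝ) → 𝔸} (hf : ContDiff ℝ (⊤ : ℕ∞) f) (c : 𝔸)
    (x : Fin d → ℝ) : laps (fun y => c * f y) x = c * laps f x := by
  unfold laps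
  rw [Finset.mul_sum]
  refine Finset.sum_congr rfl fun k _ => ?_
  have h1 : pds (fun y => c * f y) k = fun y => c * pds f k y := by
    funext y; exact pds_const_mul (sdiff hf) c k y
  rw [h1, pds_const_mul (sdiff (contDiff_pds hf k)) c]

lemma laps_sum {ι : Type*} (u : Finset ι) {f : ι → (Fin d → ℝ) → E}
    (hf : ∀ i ∈ u, ContDiff ℝ (⊤ : ℕ∞) (f i)) (x : Fin d → ℝ) :
    laps (fun y => ∑ i ∈ u, f i y) x = ∑ i ∈ u, laps (f i) x := by
  unfold laps
  rw [Finset.sum_comm]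
  refine Finset.sum_congr rfl fun k _ => ?_
  have h1 : pds (fun y => ∑ i ∈ u, f i y) k = fun y => ∑ i ∈ u, pds (f i) k y := by
    funext y; exact pds_sum u (fun i hi => sdiff (hf i hi)) k y
  rw [h1, pds_sum u (fun i hi => sdiff (contDiff_pds (hf i hi) k)) k]

lemma laps_mul {f g : (Fin d → ℝ) → 𝔸} (hf : ContDiff ℝ (⊤ : ℕ∞) f)
    (hg : ContDiff ℝ (⊤ : ℕ∞) g) (x : Fin d → ℝ) :
    laps (fun y => f y * g y) x
      = laps f x * g x + 2 * ∑ j : Fin d, pds f j x * pds g j x + f x * laps g x := by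
  unfold laps
  have h1 : ∀ k : Fin d, pds (fun y => f y * g y) k
      = fun y => pds f k y * g y + f y * pds g k y := by
    intro k; funext y; exact pds_mul (sdiff hf) (sdiff hg) k y
  have h2 : ∀ k : Fin d, pds (pds (fun y => f y * g y) k) k x
      = pds (pds f k) k x * g x + 2 * (pds f k x * pds g k x) + f x * pds (pds g k) k x := by
    intro k
    rw [h1 k]
    rw [pds_add (((sdiff (contDiff_pds hf k)).fun_mul (sdiff hg)))
      ((sdiff hf).fun_mul (sdiff (contDiff_pds hg k))) k x]
    rw [pds_mul (sdiff (contDiff_pds hf k)) (sdiff hg) k x,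
      pds_mul (sdiff hf) (sdiff (contDiff_pds hg k)) k x]
    ring
  rw [Finset.sum_congr rfl fun k _ => h2 k]
  rw [Finset.sum_add_distrib, Finset.sum_add_distrib, ← Finset.sum_mul, ← Finset.mul_sum,
    ← Finset.mul_sum]

lemma laps_ofReal {f : (Fin d → ℝ) → ℝ} (hf : ContDiff ℝ (⊤ : ℕ∞) f) (x : Fin d → ℝ) :
    laps (fun y => ((f y : ℝ) : ℂ)) x = ((laps f x : ℝ) : ℂ) := by
  unfold laps
  rw [Complex.ofReal_sum]
  refine Finset.sum_congr rfl fun k _ => ?_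
  have h1 : pds (fun y => ((f y : ℝ) : ℂ)) k = fun y => ((pds f k y : ℝ) : ℂ) := by
    funext y; exact pds_ofReal (sdiff hf) k y
  rw [h1, pds_ofReal (sdiff (contDiff_pds hf k)) k]

lemma pds_laps_comm {f : (Fin d → ℝ) → E} (hf : ContDiff ℝ (⊤ : ℕ∞) f) (k : Fin d)
    (x : Fin d → ℝ) : laps (pds f k) x = pds (laps f) k x := by
  have h1 : laps f = fun y => ∑ j : Fin d, pds (pds f j) j y := rfl
  rw [h1, pds_sum Finset.univ
    (fun j _ => sdiff (contDiff_pds (contDiff_pds hf j) j)) k x]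
  unfold laps
  refine Finset.sum_congr rfl fun j _ => ?_
  have e1 : pds (pds f k) j = pds (pds f j) k := by
    funext y; exact pds_comm hf j k y
  rw [e1, pds_comm (contDiff_pds hf j) j k]

end calcrules

/-- First (phase) component of the operator `N₁(S,A) = (−|∇S|²/2, −∇S·∇A − (A/2)ΔS + (i/2)ΔA)`. -/
def opN1S {d : ℕ} (S : (Fin d → ℝ) → ℝ) : (Fin d → ℝ) → ℝ :=
  fun x => -(∑ k : Fin d, (pds S k x) ^ 2) / 2

/-- Second (amplitude) component of the operator `N₁`. -/
def opN1A {d : ℕ} (S : (Fin d → ℝ) → ℝ) (A : (Fin d → ℝ) → ℂ) : (Fin d → ℝ) → ℂ :=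
  fun x => -(∑ k : Fin d, ((pds S k x : ℝ) : ℂ) * pds A k x)
    - A x / 2 * ((laps S x : ℝ) : ℂ) + Complex.I / 2 * laps A x

/-- First component of the Gateaux derivative `DN₁(S,A)·(S₀,A₀)`. -/
def opDN1S {d : ℕ} (S S₀ : (Fin d → ℝ) → ℝ) : (Fin d → ℝ) → ℝ :=
  fun x => -∑ k : Fin d, pds S k x * pds S₀ k x

/-- Second component of the Gateaux derivative `DN₁(S,A)·(S₀,A₀)`. -/
def opDN1A {d : ℕ} (S : (Fin d → ℝ) → ℝ) (A : (Fin d → ℝ) → ℂ)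
    (S₀ : (Fin d → ℝ) → ℝ) (A₀ : (Fin d → ℝ) → ℂ) : (Fin d → ℝ) → ℂ :=
  fun x => -(∑ k : Fin d, ((pds S k x : ℝ) : ℂ) * pds A₀ k x)
    - A₀ x / 2 * ((laps S x : ℝ) : ℂ)
    - (∑ k : Fin d, ((pds S₀ k x : ℝ) : ℂ) * pds A k x)
    - A x / 2 * ((laps S₀ x : ℝ) : ℂ)
    + Complex.I / 2 * laps A₀ x

/-- First (phase) component of the operator `N₄(S,A) = (ε²ΔS, −iεAΔS)`. -/
def opN4S {d : ℕ} (ε : ℝ) (S : (Fin d → ℝ) → ℝ) : (Fin d → ℝ) → ℝ :=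
  fun x => ε ^ 2 * laps S x

/-- Second (amplitude) component of the operator `N₄`. -/
def opN4A {d : ℕ} (ε : ℝ) (S : (Fin d → ℝ) → ℝ) (A : (Fin d → ℝ) → ℂ) : (Fin d → ℝ) → ℂ :=
  fun x => -Complex.I * (ε : ℂ) * A x * ((laps S x : ℝ) : ℂ)

/-- First component of the Gateaux derivative `DN₄(S,A)·(S₀,A₀) = (ε²ΔS₀, −iε(A₀ΔS + AΔS₀))`. -/
def opDN4S {d : ℕ} (ε : ℝ) (S₀ : (Fin d → ℝ) → ℝ) : (Fin d → ℝ) → ℝ :=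
  fun x => ε ^ 2 * laps S₀ x

/-- Second component of the Gateaux derivative `DN₄(S,A)·(S₀,A₀)`. -/
def opDN4A {d : ℕ} (ε : ℝ) (S : (Fin d → ℝ) → ℝ) (A : (Fin d → ℝ) → ℂ)
    (S₀ : (Fin d → ℝ) → ℝ) (A₀ : (Fin d → ℝ) → ℂ) : (Fin d → ℝ) → ℂ :=
  fun x => -Complex.I * (ε : ℂ) *
    (A₀ x * ((laps S x : ℝ) : ℂ) + A x * ((laps S₀ x : ℝ) : ℂ))


section ops
variable {d : ℕ} {ε : ℝ} {S : (Fin d → ℝ) → ℝ} {A : (Fin d → ℝ) → ℂ}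

lemma smooth_B (hS : ContDiff ℝ (⊤ : ℕ∞) S) :
    ContDiff ℝ (⊤ : ℕ∞) (fun y => ((laps S y : ℝ) : ℂ)) :=
  Complex.ofRealCLM.contDiff.comp (contDiff_laps hS)

lemma opN4S_eq : opN4S ε S = fun y => (ε ^ 2) * laps S y := rfl

lemma L1 (hS : ContDiff ℝ (⊤ : ℕ∞) S) (k : Fin d) (x : Fin d → ℝ) :
    pds (opN4S ε S) k x = ε ^ 2 * pds (laps S) k x := by
  rw [opN4S_eq, pds_const_mul (sdiff (contDiff_laps hS))]

lemma L2 (hS : ContDiff ℝ (⊤ : ℕ∞) S) (x : Fin d → ℝ) :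
    laps (opN4S ε S) x = ε ^ 2 * laps (laps S) x := by
  rw [opN4S_eq, laps_const_mul (contDiff_laps hS)]

lemma opN4A_eq : opN4A ε S A
    = fun y => (-Complex.I * (ε : ℂ)) * (A y * ((laps S y : ℝ) : ℂ)) := by
  funext y; simp [opN4A]; ring

lemma L3 (hS : ContDiff ℝ (⊤ : ℕ∞) S) (hA : ContDiff ℝ (⊤ : ℕ∞) A)
    (k : Fin d) (x : Fin d → ℝ) :
    pds (opN4A ε S A) k x = -Complex.I * (ε : ℂ) *
      (pds A k x * ((laps S x : ℝ) : ℂ) + A x * ((pds (laps S) k x : ℝ) : ℂ)) := by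
  rw [opN4A_eq, pds_const_mul ((sdiff hA).fun_mul (sdiff (smooth_B hS)))]
  rw [pds_mul (sdiff hA) (sdiff (smooth_B hS))]
  rw [pds_ofReal (sdiff (contDiff_laps hS))]

lemma L4 (hS : ContDiff ℝ (⊤ : ℕ∞) S) (hA : ContDiff ℝ (⊤ : ℕ∞) A) (x : Fin d → ℝ) :
    laps (opN4A ε S A) x = -Complex.I * (ε : ℂ) *
      (laps A x * ((laps S x : ℝ) : ℂ)
        + 2 * ∑ j : Fin d, ((pds (laps S) j x : ℝ) : ℂ) * pds A j x
        + A x * ((laps (laps S) x : ℝ) : ℂ)) := by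
  rw [opN4A_eq, laps_const_mul (hA.mul (smooth_B hS))]
  rw [laps_mul hA (smooth_B hS), laps_ofReal (contDiff_laps hS)]
  congr 2
  congr 1
  rw [Finset.mul_sum, Finset.mul_sum]
  refine Finset.sum_congr rfl fun j _ => ?_
  rw [pds_ofReal (sdiff (contDiff_laps hS))]
  ring

lemma opN1S_eq : opN1S S = fun y => (-(1:ℝ)/2) * ∑ k : Fin d, pds S k y * pds S k y := by
  funext y
  have h : ∑ k : Fin d, pds S k y * pds S k y = ∑ k : Fin d, (pds S k y) ^ 2 :=
    Finset.sum_congr rfl fun k _ => (sq _).symm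
  simp only [opN1S, h]
  ring

lemma L5 (hS : ContDiff ℝ (⊤ : ℕ∞) S) (x : Fin d → ℝ) :
    laps (opN1S S) x = -(∑ k : Fin d, ∑ j : Fin d, (pds (pds S k) j x) ^ 2)
      - ∑ k : Fin d, pds S k x * pds (laps S) k x := by
  rw [opN1S_eq, laps_const_mul (ContDiff.sum fun k _ =>
    (contDiff_pds hS k).mul (contDiff_pds hS k))]
  rw [laps_sum Finset.univ (fun k _ => (contDiff_pds hS k).mul (contDiff_pds hS k))]
  have h1 : ∀ k : Fin d, laps (fun y => pds S k y * pds S k y) x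
      = 2 * (pds S k x * pds (laps S) k x) + 2 * ∑ j : Fin d, (pds (pds S k) j x) ^ 2 := by
    intro k
    rw [laps_mul (contDiff_pds hS k) (contDiff_pds hS k), pds_laps_comm hS k]
    have : ∑ j : Fin d, pds (pds S k) j x * pds (pds S k) j x
        = ∑ j : Fin d, (pds (pds S k) j x) ^ 2 :=
      Finset.sum_congr rfl fun j _ => (sq _).symm
    rw [this]; ring
  rw [Finset.sum_congr rfl fun k _ => h1 k]
  rw [Finset.sum_add_distrib, ← Finset.mul_sum, ← Finset.mul_sum]
  ring

end ops

/-- For smooth `S : ℝ^d → ℝ` and `A : ℝ^d → ℂ`, the commutator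
`[N₁,N₄](S,A) = DN₁(S,A)·N₄(S,A) − DN₄(S,A)·N₁(S,A)` equals, at every point,
`(ε²Σₖ|∇(∂ₖS)|², (ε−ε²)(∇ΔS·∇A + (A/2)Δ²S) − iεAΣₖ|∇(∂ₖS)|²)`. -/
theorem commutator_N1_N4
    (d : ℕ) (hd : 1 ≤ d) (ε : ℝ)
    (S : (Fin d → ℝ) → ℝ) (A : (Fin d → ℝ) → ℂ)
    (hS : ContDiff ℝ (⊤ : ℕ∞) S) (hA : ContDiff ℝ (⊤ : ℕ∞) A) :
    ∀ x : Fin d → ℝ,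
      (opDN1S S (opN4S ε S) x - opDN4S ε (opN1S S) x
        = ε ^ 2 * ∑ k : Fin d, ∑ j : Fin d, (pds (pds S k) j x) ^ 2)
      ∧ (opDN1A S A (opN4S ε S) (opN4A ε S A) x
            - opDN4A ε S A (opN1S S) (opN1A S A) x
          = ((ε : ℂ) - (ε : ℂ) ^ 2) *
              ((∑ k : Fin d, ((pds (laps S) k x : ℝ) : ℂ) * pds A k x)
                + A x / 2 * ((laps (laps S) x : ℝ) : ℂ))
            - Complex.I * (ε : ℂ) * A x *
              ((∑ k : Fin d, ∑ j : Fin d, (pds (pds S k) j x) ^ 2 : ℝ) : ℂ)) := by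
  intro x
  constructor
  · simp only [opDN1S, opDN4S, L1 hS, L5 hS]
    have e0 : ∑ k : Fin d, pds S k x * (ε ^ 2 * pds (laps S) k x)
        = ε ^ 2 * ∑ k : Fin d, pds S k x * pds (laps S) k x := by
      rw [Finset.mul_sum]; exact Finset.sum_congr rfl fun k _ => by ring
    rw [e0]; ring
  · simp only [opDN1A, opDN4A, opN4A, opN1A, L1 hS, L2 hS, L3 hS hA, L4 hS hA, L5 hS]
    push_cast
    have ea : ∑ k : Fin d, ((pds S k x : ℝ) : ℂ) *
          (-Complex.I * (ε : ℂ) * (pds A k x * ((laps S x : ℝ) : ℂ)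
            + A x * ((pds (laps S) k x : ℝ) : ℂ)))
        = (-Complex.I * (ε : ℂ) * ((laps S x : ℝ) : ℂ)) *
            (∑ k : Fin d, ((pds S k x : ℝ) : ℂ) * pds A k x)
          + (-Complex.I * (ε : ℂ) * A x) *
            (∑ k : Fin d, ((pds S k x : ℝ) : ℂ) * ((pds (laps S) k x : ℝ) : ℂ)) := by
      rw [Finset.mul_sum, Finset.mul_sum, ← Finset.sum_add_distrib]
      exact Finset.sum_congr rfl fun k _ => by ring
    have eb : ∑ k : Fin d, ((ε : ℂ) ^ 2 * ((pds (laps S) k x : ℝ) : ℂ)) * pds A k x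
        = (ε : ℂ) ^ 2 * ∑ k : Fin d, ((pds (laps S) k x : ℝ) : ℂ) * pds A k x := by
      rw [Finset.mul_sum]; exact Finset.sum_congr rfl fun k _ => by ring
    rw [ea, eb]
    ring_nf
    simp only [Complex.I_sq]
    ring
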